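/- Let f(x,y) = x² + y⁴ on ℝ². Then {f ≤ 0} = {(0,0)}, and for all (x,y) one has dist((x,y), {(0,0)}) ≤ f(x,y)^{1/4} + f(x,y)^{1/2}. Moreover, there do not exist τ > 0 and a single exponent α ∈ ℝ with dist((x,y), {(0,0)}) ≤ τ f(x,y)^α for all (x,y) ∈ ℝ². -/

import Mathlib

private lemma sqrt_add_le' (a b : ℝ) (ha : 0 ≤ a) (hb : 0 ≤ b) :
    Real.sqrt (a + b) ≤ Real.sqrt a + Real.sqrt b := by
  rw [show a + b = Real.sqrt a ^ 2 + Real.sqrt b ^ 2 by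
    rw [Real.sq_sqrt ha, Real.sq_sqrt hb]]
  have h1 := Real.sqrt_nonneg a
  have h2 := Real.sqrt_nonneg b
  nlinarith [Real.sq_sqrt (show (0:ℝ) ≤ Real.sqrt a ^ 2 + Real.sqrt b ^ 2 by positivity),
    Real.sqrt_nonneg (Real.sqrt a ^ 2 + Real.sqrt b ^ 2)]

private lemma dist_eq' (p : EuclideanSpace ℝ (Fin 2)) :
    dist p (0 : EuclideanSpace ℝ (Fin 2)) = Real.sqrt ((p 0)^2 + (p 1)^2) := by
  rw [EuclideanSpace.dist_eq]
  congr 1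
  simp [Fin.sum_univ_two, Real.dist_eq, sq_abs]

theorem stmt4 (f : EuclideanSpace ℝ (Fin 2) → ℝ)
    (hf : ∀ p, f p = (p 0)^2 + (p 1)^4) :
    {p | f p ≤ 0} = {(0 : EuclideanSpace ℝ (Fin 2))} ∧
    (∀ p, dist p (0 : EuclideanSpace ℝ (Fin 2)) ≤ f p ^ ((1:ℝ)/4) + f p ^ ((1:ℝ)/2)) ∧
    ¬ ∃ τ > (0:ℝ), ∃ α : ℝ, ∀ p,
      dist p (0 : EuclideanSpace ℝ (Fin 2)) ≤ τ * f p ^ α := by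
  refine ⟨?_, ?_, ?_⟩
  · ext p
    simp only [Set.mem_setOf_eq, Set.mem_singleton_iff, hf]
    constructor
    · intro h
      have h0 : (p 0)^2 = 0 :=
        le_antisymm (by nlinarith [sq_nonneg ((p 1)^2)]) (sq_nonneg _)
      have h1 : (p 1)^4 = 0 :=
        le_antisymm (by nlinarith [sq_nonneg (p 0)]) (by positivity)
      have h0' : p 0 = 0 := by
        have := pow_eq_zero_iff (n := 2) (by norm_num) |>.mp h0; exact this
      have h1' : p 1 = 0 := by
        have := pow_eq_zero_iff (n := 4) (by norm_num) |>.mp h1; exact this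
      ext i
      fin_cases i <;> simp [h0', h1']
    · intro h; rw [h]; simp
  · intro p
    have hx : |p 0| ≤ f p ^ ((1:ℝ)/2) := by
      have h1 : ((p 0)^2) ^ ((1:ℝ)/2) = |p 0| := by
        rw [← sq_abs, ← Real.rpow_natCast |p 0| 2, ← Real.rpow_mul (abs_nonneg _)]
        norm_num
      rw [← h1]
      apply Real.rpow_le_rpow (sq_nonneg _) _ (by norm_num)
      rw [hf]; nlinarith [sq_nonneg ((p 1)^2)]
    have hy : |p 1| ≤ f p ^ ((1:ℝ)/4) := by
      have h1 : ((p 1)^4) ^ ((1:ℝ)/4) = |p 1| := by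
        rw [show (p 1)^4 = |p 1|^4 by rw [← abs_pow]; exact (abs_of_nonneg (by positivity)).symm,
          ← Real.rpow_natCast |p 1| 4, ← Real.rpow_mul (abs_nonneg _)]
        norm_num
      rw [← h1]
      apply Real.rpow_le_rpow (by positivity) _ (by norm_num)
      rw [hf]; nlinarith [sq_nonneg (p 0)]
    calc dist p 0 = Real.sqrt ((p 0)^2 + (p 1)^2) := dist_eq' p
      _ ≤ Real.sqrt ((p 0)^2) + Real.sqrt ((p 1)^2) :=
          sqrt_add_le' _ _ (sq_nonneg _) (sq_nonneg _)
      _ = |p 0| + |p 1| := by rw [Real.sqrt_sq_eq_abs, Real.sqrt_sq_eq_abs]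
      _ ≤ f p ^ ((1:ℝ)/4) + f p ^ ((1:ℝ)/2) := by linarith
  · rintro ⟨τ, hτ, α, hbd⟩
    have key1 : ∀ k : ℝ, 1 ≤ k → k ≤ τ * k ^ (2 * α) := by
      intro k hk
      have hk0 : (0:ℝ) < k := by linarith
      set q : EuclideanSpace ℝ (Fin 2) := (WithLp.equiv 2 (Fin 2 → ℝ)).symm ![k, 0] with hq
      have h0 : q 0 = k := rfl
      have h1 : q 1 = 0 := rfl
      have hd : dist q (0 : EuclideanSpace ℝ (Fin 2)) = k := by
        rw [dist_eq', h0, h1]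
        simp [Real.sqrt_sq hk0.le]
      have hfp : f q = k^2 := by rw [hf, h0, h1]; ring
      have hrp : (k^2:ℝ)^α = k^(2*α) := by
        rw [← Real.rpow_natCast k 2, ← Real.rpow_mul hk0.le]; norm_num
      have := hbd q
      rw [hd, hfp, hrp] at this
      exact this
    have key2 : ∀ k : ℝ, 1 ≤ k → k⁻¹ ≤ τ * k ^ (-(4 * α)) := by
      intro k hk
      have hk0 : (0:ℝ) < k := by linarith
      set q : EuclideanSpace ℝ (Fin 2) := (WithLp.equiv 2 (Fin 2 → ℝ)).symm ![0, k⁻¹] with hq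
      have h0 : q 0 = 0 := rfl
      have h1 : q 1 = k⁻¹ := rfl
      have hd : dist q (0 : EuclideanSpace ℝ (Fin 2)) = k⁻¹ := by
        rw [dist_eq', h0, h1]
        simp [Real.sqrt_sq hk0.le, Real.sqrt_sq (by positivity : (0:ℝ) ≤ k⁻¹)]
      have hfp : f q = (k⁻¹)^4 := by rw [hf, h0, h1]; ring
      have hrp : ((k⁻¹:ℝ)^4)^α = k^(-(4*α)) := by
        rw [← Real.rpow_natCast (k⁻¹) 4, ← Real.rpow_mul (by positivity),
          Real.inv_rpow hk0.le, ← Real.rpow_neg hk0.le]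
        norm_num
      have := hbd q
      rw [hd, hfp, hrp] at this
      exact this
    have hα1 : (1:ℝ) ≤ 2 * α := by
      by_contra hcon
      push_neg at hcon
      have hex : Filter.Tendsto (fun k : ℝ => k ^ (1 - 2*α)) Filter.atTop Filter.atTop :=
        tendsto_rpow_atTop (by linarith)
      obtain ⟨k, hk1, hkτ⟩ := ((hex.eventually_gt_atTop τ).and (Filter.eventually_ge_atTop 1)).exists
      have hk0 : (0:ℝ) < k := by linarith
      have hle := key1 k hkτ
      have hpos : (0:ℝ) < k ^ (2*α) := Real.rpow_pos_of_pos hk0 _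
      have h2 : k ^ (1 - 2*α) = k / k ^ (2*α) := by
        rw [Real.rpow_sub hk0, Real.rpow_one]
      rw [h2] at hk1
      have : k / k ^ (2*α) ≤ τ := by
        rw [div_le_iff₀ hpos]; linarith
      linarith
    have hα2 : 4 * α ≤ 1 := by
      by_contra hcon
      push_neg at hcon
      have hex : Filter.Tendsto (fun k : ℝ => k ^ (4*α - 1)) Filter.atTop Filter.atTop :=
        tendsto_rpow_atTop (by linarith)
      obtain ⟨k, hk1, hkτ⟩ := ((hex.eventually_gt_atTop τ).and (Filter.eventually_ge_atTop 1)).exists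
      have hk0 : (0:ℝ) < k := by linarith
      have hle := key2 k hkτ
      have hpos : (0:ℝ) < k ^ (-(4*α)) := Real.rpow_pos_of_pos hk0 _
      have h2 : k ^ (4*α - 1) = k⁻¹ / k ^ (-(4*α)) := by
        rw [div_eq_mul_inv, ← Real.rpow_neg_one k, ← Real.rpow_neg hk0.le, ← Real.rpow_add hk0]
        ring_nf
      rw [h2] at hk1
      have : k⁻¹ / k ^ (-(4*α)) ≤ τ := by
        rw [div_le_iff₀ hpos]; linarith
      linarith
    linarith
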